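/- Let m, n ≥ 3 and let L' and L be regular languages (over possibly different alphabets) with quotient complexities m and n respectively. Then κ(L' \ L) ≤ m·n + m, where L' \ L is set difference. -/

import Mathlib

/-- The alphabet of a language: letters occurring in some word of `L`. -/
def alphabetOf {α : Type*} (L : Language α) : Set α :=
  {a | ∃ u v : List α, u ++ [a] ++ v ∈ L}

/-- The left quotient of `L` by a word `w`. -/
def leftQuotient {α : Type*} (L : Language α) (w : List α) : Language α :=
  {x | w ++ x ∈ L}

/-- The set of left quotients of `L` by words over the alphabet of `L`. -/
def quotientSet {α : Type*} (L : Language α) : Set (Language α) :=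
  {K | ∃ w : List α, (∀ a ∈ w, a ∈ alphabetOf L) ∧ K = leftQuotient L w}

/-- `L` is regular with quotient complexity `m`: the set of its left quotients
(by words over its own alphabet) is finite of cardinality exactly `m`. -/
def HasComplexity {α : Type*} (L : Language α) (m : ℕ) : Prop :=
  (quotientSet L).Finite ∧ (quotientSet L).ncard = m

/-- All words whose letters lie in `S`. -/
def starOf {α : Type*} (S : Set α) : Language α :=
  {w | ∀ a ∈ w, a ∈ S}

/-- A nonempty language `L` is a right ideal if `L · Σ_L^* = L`. -/
def IsRightIdeal {α : Type*} (L : Language α) : Prop :=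
  (∃ w, w ∈ L) ∧ L * starOf (alphabetOf L) = L

/-- A nonempty language `L` is a left ideal if `Σ_L^* · L = L`. -/
def IsLeftIdeal {α : Type*} (L : Language α) : Prop :=
  (∃ w, w ∈ L) ∧ starOf (alphabetOf L) * L = L

/-- A nonempty language `L` is a two-sided ideal if `Σ_L^* · L · Σ_L^* = L`. -/
def IsTwoSidedIdeal {α : Type*} (L : Language α) : Prop :=
  (∃ w, w ∈ L) ∧ starOf (alphabetOf L) * L * starOf (alphabetOf L) = L

lemma alphabet_diff_subset {α : Type*} (L' L : Language α) :
    alphabetOf (L' \ L) ⊆ alphabetOf L' := by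
  rintro a ⟨u, v, hu⟩
  exact ⟨u, v, hu.1⟩

lemma leftQuotient_notMem {α : Type*} (L : Language α) (w : List α)
    (h : ∃ a ∈ w, a ∉ alphabetOf L) : ∀ x, x ∉ leftQuotient L w := by
  obtain ⟨a, haw, ha⟩ := h
  intro x hx
  obtain ⟨s, t, rfl⟩ := List.append_of_mem haw
  exact ha ⟨s, t ++ x, by simpa [leftQuotient, List.append_assoc] using (show s ++ a :: t ++ x ∈ L from hx)⟩

lemma quotientSet_diff_subset {α : Type*} (L' L : Language α) :
    quotientSet (L' \ L) ⊆
      Set.image2 (· \ ·) (quotientSet L') (quotientSet L) ∪ quotientSet L' := by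
  rintro K ⟨w, hw, rfl⟩
  have hw' : ∀ a ∈ w, a ∈ alphabetOf L' := fun a ha =>
    alphabet_diff_subset L' L (hw a ha)
  by_cases h : ∀ a ∈ w, a ∈ alphabetOf L
  · exact Or.inl ⟨leftQuotient L' w, ⟨w, hw', rfl⟩, leftQuotient L w, ⟨w, h, rfl⟩, rfl⟩
  · push_neg at h
    refine Or.inr ⟨w, hw', ?_⟩
    have hno := leftQuotient_notMem L w h
    ext x
    show w ++ x ∈ L' \ L ↔ w ++ x ∈ L'
    exact ⟨fun hx => hx.1, fun hx => ⟨hx, fun hc => hno x hc⟩⟩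

lemma ncard_image2_le' {α β γ : Type*} (f : α → β → γ) (s : Set α) (t : Set β)
    (hs : s.Finite) (ht : t.Finite) :
    (Set.image2 f s t).ncard ≤ s.ncard * t.ncard := by
  classical
  have h1 : Set.image2 f s t = Finset.image₂ f hs.toFinset ht.toFinset := by
    simp [Finset.coe_image₂]
  rw [h1, Set.ncard_coe_finset, Set.ncard_eq_toFinset_card s hs,
    Set.ncard_eq_toFinset_card t ht]
  exact Finset.card_image₂_le f hs.toFinset ht.toFinset

theorem difference_upper_bound {α : Type*} (m n : ℕ) (hm : 3 ≤ m) (hn : 3 ≤ n)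
    (L' L : Language α) (hL' : HasComplexity L' m) (hL : HasComplexity L n) :
    (quotientSet (L' \ L)).Finite ∧
      (quotientSet (L' \ L)).ncard ≤ m * n + m := by
  obtain ⟨hf', hc'⟩ := hL'
  obtain ⟨hf, hc⟩ := hL
  have hsub := quotientSet_diff_subset L' L
  have hbig : (Set.image2 (· \ ·) (quotientSet L') (quotientSet L) ∪ quotientSet L').Finite :=
    (hf'.image2 _ hf).union hf'
  refine ⟨hbig.subset hsub, ?_⟩
  calc (quotientSet (L' \ L)).ncard
      ≤ (Set.image2 (· \ ·) (quotientSet L') (quotientSet L) ∪ quotientSet L').ncard :=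
        Set.ncard_le_ncard hsub hbig
    _ ≤ (Set.image2 (· \ ·) (quotientSet L') (quotientSet L)).ncard
          + (quotientSet L').ncard := Set.ncard_union_le _ _
    _ ≤ (quotientSet L').ncard * (quotientSet L).ncard + (quotientSet L').ncard := by
        gcongr
        exact ncard_image2_le' _ _ _ hf' hf
    _ = m * n + m := by rw [hc', hc]
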